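/- arXiv:1704.04025 — 2 statements merged into one kernel-verified Lean document; each statement's English description precedes it below -/
import Mathlib

section
/- (Multiplication-type distribution formula) For every odd positive integer w₁ and all n ≥ 0: w₁^n · Σ_{i=0}^{w₁-1} (-1)^i 𝓔_n(x + i/w₁ | λ/w₁) = 𝓔_n(w₁ x | λ). -/
open Polynomial Finset

noncomputable def dff {R : Type*} [CommRing R] (μ : R) (n : ℕ) : Polynomial R :=
  ∏ i ∈ Finset.range n, (Polynomial.X - Polynomial.C ((i : R) * μ))

instance : CharZero (RatFunc ℚ) :=
  charZero_of_injective_algebraMap (algebraMap ℚ (RatFunc ℚ)).injective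

lemma cancel_shift {F : Type*} [Field F] [CharZero F] (c : F) {P Q : Polynomial F}
    (h : P.comp (Polynomial.X + Polynomial.C c) + P
       = Q.comp (Polynomial.X + Polynomial.C c) + Q) : P = Q := by
  by_contra hne
  have hD0 : P - Q ≠ 0 := sub_ne_zero.mpr hne
  have hcomp : (P - Q).comp (Polynomial.X + Polynomial.C c) = -(P - Q) := by
    rw [sub_comp]; linear_combination h
  have hlc : ((P - Q).comp (Polynomial.X + Polynomial.C c)).leadingCoeff
      = (P - Q).leadingCoeff := by
    rw [Polynomial.leadingCoeff_comp (by simp [natDegree_X_add_C])]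
    simp [Polynomial.monic_X_add_C c]
  rw [hcomp, leadingCoeff_neg] at hlc
  have h2 : (2 : F) * (P - Q).leadingCoeff = 0 := by linear_combination -hlc
  rcases mul_eq_zero.mp h2 with h | h
  · exact two_ne_zero h
  · exact hD0 (leadingCoeff_eq_zero.mp h)

/-- Multiplication-type distribution formula:
`w₁^n ∑_{i=0}^{w₁-1} (-1)^i 𝓔_n(x + i/w₁ | λ/w₁) = 𝓔_n(w₁ x | λ)` for odd `w₁`. -/
theorem stmt8 (E : RatFunc ℚ → ℕ → Polynomial (RatFunc ℚ))
    (hE : ∀ μ m, (E μ m).comp (Polynomial.X + 1) + E μ m = 2 * dff μ m)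
    (w₁ : ℕ) (hw₁ : Odd w₁) (hw₁' : 0 < w₁) (n : ℕ) :
    Polynomial.C ((w₁ : RatFunc ℚ) ^ n) *
        ∑ i ∈ Finset.range w₁, Polynomial.C ((-1 : RatFunc ℚ) ^ i) *
          (E (RatFunc.X / (w₁ : RatFunc ℚ)) n).comp
            (Polynomial.X + Polynomial.C ((i : RatFunc ℚ) / (w₁ : RatFunc ℚ))) =
      (E (RatFunc.X : RatFunc ℚ) n).comp
        (Polynomial.C (w₁ : RatFunc ℚ) * Polynomial.X) := by
  set F := RatFunc ℚ
  set w : F := (w₁ : F) with hw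
  have hw0 : w ≠ 0 := by
    rw [hw]
    exact_mod_cast hw₁'.ne'
  set μ' : F := RatFunc.X / w with hμ'
  apply cancel_shift (c := w⁻¹)
  -- compose general shift lemma
  have shift : ∀ (p : Polynomial F) (a b : F),
      (p.comp (Polynomial.X + Polynomial.C a)).comp (Polynomial.X + Polynomial.C b)
        = p.comp (Polynomial.X + Polynomial.C (a + b)) := by
    intro p a b
    rw [Polynomial.comp_assoc]
    congr 1
    simp [add_comp]
    ring
  -- LHS computation
  have hL : ((Polynomial.C (w ^ n) *
        ∑ i ∈ Finset.range w₁, Polynomial.C ((-1 : F) ^ i) *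
          (E μ' n).comp (Polynomial.X + Polynomial.C ((i : F) / w))).comp
            (Polynomial.X + Polynomial.C w⁻¹)) +
      (Polynomial.C (w ^ n) *
        ∑ i ∈ Finset.range w₁, Polynomial.C ((-1 : F) ^ i) *
          (E μ' n).comp (Polynomial.X + Polynomial.C ((i : F) / w)))
      = Polynomial.C (w ^ n) * (2 * dff μ' n) := by
    rw [mul_comp, C_comp, Polynomial.sum_comp, ← mul_add]
    congr 1
    have : (∑ i ∈ Finset.range w₁, (Polynomial.C ((-1 : F) ^ i) *
          (E μ' n).comp (Polynomial.X + Polynomial.C ((i : F) / w))).comp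
            (Polynomial.X + Polynomial.C w⁻¹)) +
        ∑ i ∈ Finset.range w₁, Polynomial.C ((-1 : F) ^ i) *
          (E μ' n).comp (Polynomial.X + Polynomial.C ((i : F) / w))
        = ∑ i ∈ Finset.range w₁,
            ((fun j : ℕ => Polynomial.C ((-1 : F) ^ j) *
              (E μ' n).comp (Polynomial.X + Polynomial.C ((j : F) / w))) i -
             (fun j : ℕ => Polynomial.C ((-1 : F) ^ j) *
              (E μ' n).comp (Polynomial.X + Polynomial.C ((j : F) / w))) (i+1)) := by
      rw [← Finset.sum_add_distrib]
      apply Finset.sum_congr rfl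
      intro i _
      simp only [mul_comp, C_comp, shift]
      have harg : ((i : F) / w + w⁻¹) = (((i+1 : ℕ) : F) / w) := by
        push_cast
        rw [inv_eq_one_div, ← add_div]
      rw [harg, pow_succ, Polynomial.C_mul, map_neg, Polynomial.C_1]
      ring
    rw [this, Finset.sum_range_sub']
    have hg0 : Polynomial.C ((-1 : F) ^ 0) *
        (E μ' n).comp (Polynomial.X + Polynomial.C ((0 : ℕ) / w : F)) = E μ' n := by
      simp
    have hgw : Polynomial.C ((-1 : F) ^ w₁) *
        (E μ' n).comp (Polynomial.X + Polynomial.C ((w₁ : F) / w)) =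
        -(E μ' n).comp (Polynomial.X + 1) := by
      rw [hw₁.neg_one_pow]
      rw [div_self hw0]
      simp
    simp only [hg0, hgw, sub_neg_eq_add]
    rw [add_comm]
    exact hE μ' n
  rw [hL]
  -- RHS computation
  have hR : ((E (RatFunc.X : F) n).comp (Polynomial.C w * Polynomial.X)).comp
        (Polynomial.X + Polynomial.C w⁻¹) +
      (E (RatFunc.X : F) n).comp (Polynomial.C w * Polynomial.X)
      = (2 * dff (RatFunc.X : F) n).comp (Polynomial.C w * Polynomial.X) := by
    rw [Polynomial.comp_assoc]
    have : (Polynomial.C w * Polynomial.X).comp (Polynomial.X + Polynomial.C w⁻¹)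
        = (Polynomial.X + 1).comp (Polynomial.C w * Polynomial.X) := by
      simp [mul_comp, add_comp, mul_add, ← Polynomial.C_mul, mul_inv_cancel₀ hw0]
    rw [this, ← Polynomial.comp_assoc, ← add_comp, hE]
  rw [hR]
  -- final dff identity
  rw [mul_comp]
  have h2 : (2 : Polynomial F).comp (Polynomial.C w * Polynomial.X) = 2 := by
    simp
  rw [h2]
  have hdff : Polynomial.C (w ^ n) * dff μ' n
      = (dff (RatFunc.X : F) n).comp (Polynomial.C w * Polynomial.X) := by
    unfold dff
    rw [Polynomial.prod_comp, Polynomial.C_pow]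
    have hc : (Polynomial.C w) ^ n = ∏ _i ∈ Finset.range n, Polynomial.C w := by
      rw [Finset.prod_const, Finset.card_range]
    rw [hc, ← Finset.prod_mul_distrib]
    apply Finset.prod_congr rfl
    intro i _
    rw [sub_comp, X_comp, C_comp, mul_sub, ← Polynomial.C_mul]
    congr 2
    rw [hμ']
    rw [mul_left_comm, mul_div_assoc', mul_comm w, mul_div_assoc, div_self hw0, mul_one]
  linear_combination 2 * hdff
end

section
/- (Theorem 1 of the paper) For odd positive integers w₁, w₂, every n ≥ 0, every m ≥ 1, and parameters x, y: Σ_{j=0}^{n} C(n,j) w₂^j w₁^{n-j} 𝓔_{n-j}^{(m)}(w₂x | λ/w₁) Σ_{k=0}^{j} C(j,k) S̃_k(w₁-1 | λ/w₂) 𝓔_{j-k}^{(m-1)}(w₁y | λ/w₂) = Σ_{j=0}^{n} C(n,j) w₁^j w₂^{n-j} 𝓔_{n-j}^{(m)}(w₁x | λ/w₂) Σ_{k=0}^{j} C(j,k) S̃_k(w₂-1 | λ/w₁) 𝓔_{j-k}^{(m-1)}(w₂y | λ/w₁). -/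
open Polynomial Finset

/-- `S̃_k(N|μ) = ∑_{l=0}^N (-1)^l (l|μ)_k`. -/
noncomputable def Stilde {R : Type*} [CommRing R] (μ : R) (k N : ℕ) : R :=
  ∑ l ∈ Finset.range (N + 1), (-1 : R) ^ l * (dff μ k).eval (l : R)

set_option linter.unusedSectionVars false
set_option maxHeartbeats 1000000

section Generic
variable {R : Type*} [CommRing R]

lemma dff_zero (μ : R) : dff μ 0 = 1 := by simp [dff]

lemma dff_succ (μ : R) (n : ℕ) : dff μ (n+1) = dff μ n * (X - C ((n:R) * μ)) := by
  simp [dff, prod_range_succ]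

lemma dff_eval_succ (μ c : R) (n : ℕ) :
    (dff μ (n+1)).eval c = (dff μ n).eval c * (c - (n:R)*μ) := by
  simp [dff_succ]

lemma dff_comp_add (μ c : R) (n : ℕ) :
    (dff μ n).comp (X + C c)
      = ∑ k ∈ range (n+1), C ((n.choose k : R) * (dff μ k).eval c) * dff μ (n-k) := by
  induction n with
  | zero => simp [dff]
  | succ n ih =>
    have key : (dff μ (n+1)).comp (X + C c)
        = (∑ k ∈ range (n+1), C ((n.choose k : R) * (dff μ k).eval c) * dff μ (n+1-k))
          + ∑ k ∈ range (n+1), C ((n.choose k : R) * (dff μ (k+1)).eval c) * dff μ (n-k) := by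
      rw [dff_succ, mul_comp, ih, sub_comp, X_comp, C_comp, Finset.sum_mul,
        ← Finset.sum_add_distrib]
      refine Finset.sum_congr rfl fun k hk => ?_
      have hk' : k ≤ n := Nat.lt_succ_iff.mp (Finset.mem_range.mp hk)
      have h1 : X + C c - C ((n:R)*μ) = (X - C (((n-k : ℕ):R)*μ)) + C (c - (k:R)*μ) := by
        simp only [Nat.cast_sub hk', C_mul, C_sub]
        ring
      rw [h1, mul_add]
      congr 1
      · rw [mul_assoc, ← dff_succ, Nat.succ_sub hk']
      · simp only [dff_eval_succ, C_mul]; ring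
    rw [key]
    rw [Finset.sum_range_succ'
      (fun k => C (((n+1).choose k : R) * (dff μ k).eval c) * dff μ (n+1-k)) (n+1)]
    have hsplit : ∀ k ∈ range (n+1),
        C ((((n+1).choose (k+1) : ℕ) : R) * (dff μ (k+1)).eval c) * dff μ (n+1-(k+1))
        = C ((n.choose k : R) * (dff μ (k+1)).eval c) * dff μ (n-k)
          + C ((n.choose (k+1) : R) * (dff μ (k+1)).eval c) * dff μ (n-k) := by
      intro k _
      rw [Nat.choose_succ_succ]
      push_cast
      rw [add_mul, C_add, add_mul]
    rw [Finset.sum_congr rfl hsplit, Finset.sum_add_distrib]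
    -- now goal: S1 + S2 = (S2 + Sg) + f0
    have hS1 : (∑ k ∈ range (n+1), C ((n.choose k : R) * (dff μ k).eval c) * dff μ (n+1-k))
        = (∑ k ∈ range (n+1), C ((n.choose (k+1) : R) * (dff μ (k+1)).eval c) * dff μ (n-k))
          + C (((n+1).choose 0 : R) * (dff μ 0).eval c) * dff μ (n+1-0) := by
      rw [Finset.sum_range_succ'
        (fun k => C ((n.choose k : R) * (dff μ k).eval c) * dff μ (n+1-k)) n]
      rw [Finset.sum_range_succ
        (fun k => C ((n.choose (k+1) : R) * (dff μ (k+1)).eval c) * dff μ (n-k)) n]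
      simp [Nat.choose_succ_self, Nat.succ_sub_succ]
    rw [hS1]
    ring
end Generic



section Inj
variable {R : Type*} [CommRing R] [IsDomain R] [CharZero R]

lemma T_inj (c : R) :
    Function.Injective fun p : Polynomial R => p.comp (X + C c) + p := by
  intro p q h
  simp only at h
  by_contra hne
  have hd : p - q ≠ 0 := sub_ne_zero.mpr hne
  have h0 : (p - q).comp (X + C c) + (p - q) = 0 := by
    rw [sub_comp]; linear_combination h
  have hc : ((p-q).comp (X + C c)).coeff ((p-q).natDegree) = (p-q).leadingCoeff := by
    have h2 := coeff_comp_degree_mul_degree (p := p - q) (q := X + C c)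
      (by rw [natDegree_X_add_C]; exact one_ne_zero)
    simpa [natDegree_X_add_C, (monic_X_add_C c).leadingCoeff] using h2
  have h3 := congrArg (fun f => f.coeff (p-q).natDegree) h0
  simp only [coeff_add, hc, coeff_zero, Polynomial.coeff_natDegree] at h3
  have h4 : (2:R) * (p-q).leadingCoeff = 0 := by linear_combination h3
  have h5 : (p-q).leadingCoeff = 0 := (mul_eq_zero.mp h4).resolve_left two_ne_zero
  exact (Polynomial.leadingCoeff_ne_zero.mpr hd) h5
end Inj



section Euler
variable {F : Type*} [CommRing F] [IsDomain F] [CharZero F]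
variable (E : F → ℕ → ℕ → Polynomial F)

lemma E_comp_add (hE0 : ∀ μ n, E μ 0 n = dff μ n)
    (hErec : ∀ μ r n, (E μ (r + 1) n).comp (X + 1) + E μ (r + 1) n = 2 * E μ r n)
    (μ : F) (r n : ℕ) (c : F) :
    (E μ r n).comp (X + C c)
      = ∑ k ∈ range (n+1), C ((n.choose k : F) * (dff μ k).eval c) * E μ r (n-k) := by
  induction r with
  | zero =>
    rw [hE0, dff_comp_add]
    exact Finset.sum_congr rfl fun k _ => by rw [hE0]
  | succ r ih =>
    have hc2 : ∀ p : Polynomial F,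
        (p.comp (X + C c)).comp (X + C 1) = (p.comp (X + C 1)).comp (X + C c) := by
      intro p
      rw [comp_assoc, comp_assoc]
      congr 1
      simp only [add_comp, X_comp, C_comp]
      ring
    apply T_inj (1 : F)
    simp only
    calc ((E μ (r+1) n).comp (X + C c)).comp (X + C 1) + (E μ (r+1) n).comp (X + C c)
        = ((E μ (r+1) n).comp (X + C 1) + E μ (r+1) n).comp (X + C c) := by
          rw [add_comp, hc2]
      _ = (2 * E μ r n).comp (X + C c) := by rw [C_1, hErec]
      _ = 2 * ((E μ r n).comp (X + C c)) := by simp [mul_comp]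
      _ = ∑ k ∈ range (n+1), C ((n.choose k : F) * (dff μ k).eval c) * (2 * E μ r (n-k)) := by
          rw [ih, Finset.mul_sum]
          exact Finset.sum_congr rfl fun k _ => by ring
      _ = ∑ k ∈ range (n+1), C ((n.choose k : F) * (dff μ k).eval c) *
            ((E μ (r+1) (n-k)).comp (X + 1) + E μ (r+1) (n-k)) := by
          exact Finset.sum_congr rfl fun k _ => by rw [hErec]
      _ = (∑ k ∈ range (n+1), C ((n.choose k : F) * (dff μ k).eval c) * E μ (r+1) (n-k)).comp
            (X + C 1)
          + ∑ k ∈ range (n+1), C ((n.choose k : F) * (dff μ k).eval c) * E μ (r+1) (n-k) := by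
          rw [C_1, Polynomial.sum_comp, ← Finset.sum_add_distrib]
          exact Finset.sum_congr rfl fun k _ => by rw [mul_comp, C_comp]; ring

lemma E_alt_sum
    (hErec : ∀ μ r n, (E μ (r + 1) n).comp (X + 1) + E μ (r + 1) n = 2 * E μ r n)
    (μ : F) (r n : ℕ) (N : ℕ) :
    2 * ∑ l ∈ range N, (-1 : Polynomial F)^l * (E μ r n).comp (X + C (l : F))
      = E μ (r+1) n + (-1)^(N+1) * (E μ (r+1) n).comp (X + C (N : F)) := by
  induction N with
  | zero => simp
  | succ N ihN =>
    rw [Finset.sum_range_succ, mul_add, ihN]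
    have hstep : 2 * ((E μ r n).comp (X + C (N:F)))
        = (E μ (r+1) n).comp (X + C ((N+1 : ℕ):F)) + (E μ (r+1) n).comp (X + C (N:F)) := by
      have h := congrArg (fun p => p.comp (X + C (N:F))) (hErec μ r n)
      simp only [add_comp, mul_comp] at h
      rw [comp_assoc] at h
      have hx : (X + 1 : Polynomial F).comp (X + C (N:F)) = X + C ((N+1:ℕ):F) := by
        push_cast
        simp [add_comp, C_add]
        ring
      rw [hx] at h
      have h2 : ((2 : Polynomial F).comp (X + C (N:F))) = 2 := by
        simp
      rw [h2] at h
      linear_combination -h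
    have hsign : ((-1 : Polynomial F))^(N+1) = -(-1)^N := by rw [pow_succ]; ring
    have hsign2 : ((-1 : Polynomial F))^(N+1+1) = (-1)^N := by rw [pow_succ, pow_succ]; ring
    rw [hsign2, hsign]
    have : 2 * ((-1:Polynomial F)^N * (E μ r n).comp (X + C (N:F)))
        = (-1:Polynomial F)^N * (2 * (E μ r n).comp (X + C (N:F))) := by ring
    rw [this, hstep]
    ring

lemma E_inner (hE0 : ∀ μ n, E μ 0 n = dff μ n)
    (hErec : ∀ μ r n, (E μ (r + 1) n).comp (X + 1) + E μ (r + 1) n = 2 * E μ r n)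
    (μ : F) (j m' : ℕ) (w : ℕ) (hw : Odd w) :
    2 * ∑ k ∈ range (j+1), C ((j.choose k : F) * Stilde μ k (w-1)) * E μ m' (j-k)
      = E μ (m'+1) j + (E μ (m'+1) j).comp (X + C (w : F)) := by
  have hw1 : w - 1 + 1 = w := Nat.succ_pred_eq_of_pos hw.pos
  have step1 : ∑ k ∈ range (j+1), C ((j.choose k : F) * Stilde μ k (w-1)) * E μ m' (j-k)
      = ∑ l ∈ range w, (-1 : Polynomial F)^l *
          ∑ k ∈ range (j+1), C ((j.choose k : F) * (dff μ k).eval (l:F)) * E μ m' (j-k) := by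
    calc ∑ k ∈ range (j+1), C ((j.choose k : F) * Stilde μ k (w-1)) * E μ m' (j-k)
        = ∑ k ∈ range (j+1), ∑ l ∈ range w,
            (-1:Polynomial F)^l * (C ((j.choose k : F) * (dff μ k).eval (l:F)) * E μ m' (j-k)) := by
          refine Finset.sum_congr rfl fun k _ => ?_
          rw [Stilde, hw1, Finset.mul_sum, map_sum, Finset.sum_mul]
          refine Finset.sum_congr rfl fun l _ => ?_
          rw [show (j.choose k : F) * ((-1:F)^l * (dff μ k).eval (l:F))
              = (-1:F)^l * ((j.choose k : F) * (dff μ k).eval (l:F)) from by ring,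
            C_mul, map_pow, map_neg, C_1]
          ring
      _ = ∑ l ∈ range w, (-1:Polynomial F)^l *
            ∑ k ∈ range (j+1), C ((j.choose k : F) * (dff μ k).eval (l:F)) * E μ m' (j-k) := by
          rw [Finset.sum_comm]
          exact Finset.sum_congr rfl fun l _ => by rw [Finset.mul_sum]
  rw [step1,
    show (∑ l ∈ range w, (-1:Polynomial F)^l *
        ∑ k ∈ range (j+1), C ((j.choose k : F) * (dff μ k).eval (l:F)) * E μ m' (j-k))
      = ∑ l ∈ range w, (-1:Polynomial F)^l * (E μ m' j).comp (X + C (l:F)) from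
      Finset.sum_congr rfl fun l _ => by rw [← E_comp_add E hE0 hErec μ m' j (l:F)],
    E_alt_sum E hErec μ m' j w,
    show ((-1:Polynomial F))^(w+1) = 1 from Even.neg_one_pow hw.add_one, one_mul]
end Euler



set_option linter.unusedSectionVars false
section Biv
variable {F : Type*} [CommRing F] [IsDomain F] [CharZero F]

/-- shift ring hom on `F[X]`: `p ↦ p.comp (X + C c)`. -/
noncomputable def shrH (c : F) : Polynomial F →+* Polynomial F :=
  eval₂RingHom C (X + C c)

lemma shrH_apply (c : F) (p : Polynomial F) : shrH c p = p.comp (X + C c) := rfl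

lemma shrH_C (c a : F) : shrH c (C a) = C a := by simp [shrH_apply]

lemma shrH_comp_C (c : F) : (shrH c).comp (C : F →+* Polynomial F) = C :=
  RingHom.ext fun a => shrH_C c a

/-- `x`-lift: `p(x)` as element of `F[y][x]`. -/
noncomputable def xup : Polynomial F →+* Polynomial (Polynomial F) :=
  mapRingHom (C : F →+* Polynomial F)

lemma xup_apply (p : Polynomial F) : (xup p : Polynomial (Polynomial F)) = p.map C := rfl

/-- operator `Q c : f(x,y) ↦ f(x+c,y) + f(x,y)`. -/
noncomputable def Qq (c : F) (p : Polynomial (Polynomial F)) : Polynomial (Polynomial F) :=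
  p.comp (X + C (C c)) + p

/-- operator `R c : f(x,y) ↦ f(x,y+c) + f(x,y)`. -/
noncomputable def Rr (c : F) (p : Polynomial (Polynomial F)) : Polynomial (Polynomial F) :=
  p.map (shrH c) + p

lemma Qq_inj (c : F) : Function.Injective (Qq (F := F) c) := T_inj (C c)

lemma Rr_inj (c : F) : Function.Injective (Rr (F := F) c) := by
  intro p q h
  ext i : 1
  apply T_inj c
  have := congrArg (fun r => Polynomial.coeff r i) h
  simpa [Rr, coeff_map, shrH_apply] using this

lemma Qq_add (c : F) (p q : Polynomial (Polynomial F)) :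
    Qq c (p + q) = Qq c p + Qq c q := by
  simp only [Qq, add_comp]; ring

lemma Rr_add (c : F) (p q : Polynomial (Polynomial F)) :
    Rr c (p + q) = Rr c p + Rr c q := by
  simp only [Rr, Polynomial.map_add]; ring

lemma Qq_natCast (c : F) (k : ℕ) (p : Polynomial (Polynomial F)) :
    Qq c ((k : Polynomial (Polynomial F)) * p) = k * Qq c p := by
  simp only [Qq, mul_comp, natCast_comp]; ring

lemma Rr_natCast (c : F) (k : ℕ) (p : Polynomial (Polynomial F)) :
    Rr c ((k : Polynomial (Polynomial F)) * p) = k * Rr c p := by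
  simp only [Rr, Polynomial.map_mul, Polynomial.map_natCast]; ring

-- commutation of the underlying maps
lemma map_shr_comp (c d : F) (p : Polynomial (Polynomial F)) :
    (p.map (shrH d)).comp (X + C (C c)) = (p.comp (X + C (C c))).map (shrH d) := by
  rw [Polynomial.map_comp]
  congr 1
  simp [shrH_C]

lemma Qq_Rr_comm (c d : F) (p : Polynomial (Polynomial F)) :
    Qq c (Rr d p) = Rr d (Qq c p) := by
  simp only [Qq, Rr, add_comp, Polynomial.map_add, map_shr_comp]; ring

lemma Qq_Qq_comm (c d : F) (p : Polynomial (Polynomial F)) :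
    Qq c (Qq d p) = Qq d (Qq c p) := by
  have h : ∀ c d : F, (p.comp (X + C (C d))).comp (X + C (C c))
      = p.comp (X + (C (C c) + C (C d))) := by
    intro c d
    rw [comp_assoc]
    congr 1
    simp [add_comp]
    ring
  simp only [Qq, add_comp, h]
  rw [add_comm (C (C c)) (C (C d))]
  ring

lemma Rr_Rr_comm (c d : F) (p : Polynomial (Polynomial F)) :
    Rr c (Rr d p) = Rr d (Rr c p) := by
  have h : ∀ c d : F, (p.map (shrH d)).map (shrH c) = p.map ((shrH c).comp (shrH d)) :=
    fun c d => (Polynomial.map_map _ _ _)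
  have h2 : ∀ c d : F, (shrH (c : F)).comp (shrH d) = (shrH d).comp (shrH c) := by
    intro c d
    refine RingHom.ext fun q => ?_
    simp only [RingHom.comp_apply, shrH_apply]
    rw [comp_assoc, comp_assoc]
    congr 1
    simp [add_comp]
    ring
  simp only [Rr, Polynomial.map_add, h, h2 c d]
  ring

-- action on product terms
lemma Qq_term (c : F) (p q : Polynomial F) :
    Qq c (xup p * C q) = xup (p.comp (X + C c) + p) * C q := by
  simp only [Qq, mul_comp, C_comp, xup_apply, map_add]
  rw [Polynomial.map_comp]
  simp only [Polynomial.map_add, map_X, map_C]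
  ring

lemma Rr_term (c : F) (p q : Polynomial F) :
    Rr c (xup p * C q) = xup p * C (q.comp (X + C c) + q) := by
  simp only [Rr, Polynomial.map_mul, map_C, shrH_apply, xup_apply, Polynomial.map_map,
    shrH_comp_C, map_add]
  ring

-- the diagonal family
noncomputable def Dfam (μ : F) (nn : ℕ) (e : F) : Polynomial (Polynomial F) :=
  (xup (dff μ nn)).comp (X + C (X + C e))

lemma Dfam_comp (μ : F) (nn : ℕ) (e c : F) :
    (Dfam μ nn e).comp (X + C (C c)) = Dfam μ nn (e + c) := by
  rw [Dfam, Dfam, comp_assoc]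
  congr 1
  simp only [add_comp, X_comp, C_comp, map_add]
  ring

lemma Dfam_map (μ : F) (nn : ℕ) (e c : F) :
    (Dfam μ nn e).map (shrH c) = Dfam μ nn (e + c) := by
  rw [Dfam, Dfam, Polynomial.map_comp, xup_apply, Polynomial.map_map, shrH_comp_C, ← xup_apply]
  congr 1
  simp only [Polynomial.map_add, map_X, map_C, shrH_apply, add_comp, X_comp, C_comp, C_add]
  ring

def Diag (p : Polynomial (Polynomial F)) : Prop :=
  ∀ c : F, p.comp (X + C (C c)) = p.map (shrH c)

lemma Diag_Dfam (μ : F) (nn : ℕ) (e : F) : Diag (Dfam μ nn e) := by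
  intro c; rw [Dfam_comp, Dfam_map]

lemma Diag_Qq (c : F) (p : Polynomial (Polynomial F)) (hp : Diag p) : Diag (Qq c p) := by
  intro d
  have h : (p.comp (X + C (C c))).comp (X + C (C d))
      = (p.comp (X + C (C d))).comp (X + C (C c)) := by
    rw [comp_assoc, comp_assoc]
    congr 1
    simp [add_comp]
    ring
  simp only [Qq, add_comp, Polynomial.map_add]
  rw [h, hp d, map_shr_comp]

lemma Diag_Rr (c : F) (p : Polynomial (Polynomial F)) (hp : Diag p) : Diag (Rr c p) := by
  intro d
  simp only [Rr, add_comp, Polynomial.map_add]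
  rw [map_shr_comp, hp d]
  congr 1
  rw [Polynomial.map_map, Polynomial.map_map]
  congr 1
  refine RingHom.ext fun q => ?_
  simp only [RingHom.comp_apply, shrH_apply]
  rw [comp_assoc, comp_assoc]
  congr 1
  simp [add_comp]
  ring

lemma Diag_QR (c : F) (p : Polynomial (Polynomial F)) (hp : Diag p) : Qq c p = Rr c p := by
  simp only [Qq, Rr, hp c]

lemma Diag_Qq_iter (c : F) (k : ℕ) (p : Polynomial (Polynomial F)) (hp : Diag p) :
    Diag ((Qq c)^[k] p) := by
  induction k generalizing p with
  | zero => simpa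
  | succ k ih => rw [Function.iterate_succ_apply]; exact ih _ (Diag_Qq c p hp)

lemma Rr_iter_eq_Qq_iter (c : F) (k : ℕ) (p : Polynomial (Polynomial F)) (hp : Diag p) :
    (Rr c)^[k] p = (Qq c)^[k] p := by
  induction k generalizing p with
  | zero => simp
  | succ k ih =>
    rw [Function.iterate_succ_apply, Function.iterate_succ_apply,
      ← Diag_QR c p hp, ih _ (Diag_Qq c p hp)]

lemma key_swap (c d : F) (k : ℕ) (p : Polynomial (Polynomial F)) (hp : Diag p) :
    (Qq c)^[k] ((Rr d)^[k] p) = (Qq d)^[k] ((Rr c)^[k] p) := by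
  rw [Rr_iter_eq_Qq_iter d k p hp, Rr_iter_eq_Qq_iter c k p hp]
  have hcm : Function.Commute (Qq (F:=F) c) (Qq d) := fun p => Qq_Qq_comm c d p
  exact ((hcm.iterate_left k).iterate_right k) p

end Biv




section GP
set_option linter.unusedSectionVars false
variable {F : Type*} [Field F] [CharZero F]
variable (E : F → ℕ → ℕ → Polynomial F)

noncomputable def Gp (lam : F) (w : ℕ) (r d : ℕ) : Polynomial F :=
  C ((w:F))^d * (E (lam / w) r d).comp (C ((w:F))⁻¹ * X)

lemma Gp_zero (hE0 : ∀ μ n, E μ 0 n = dff μ n) (lam : F) (w : ℕ) (hw : (w:F) ≠ 0) (d : ℕ) :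
    Gp E lam w 0 d = dff lam d := by
  rw [Gp, hE0, dff, dff, Polynomial.prod_comp,
    show (C ((w:F)))^d = ∏ _i ∈ range d, C ((w:F)) by rw [Finset.prod_const, card_range],
    ← Finset.prod_mul_distrib]
  refine Finset.prod_congr rfl fun i _ => ?_
  rw [sub_comp, X_comp, C_comp, mul_sub, ← mul_assoc, ← C_mul, mul_inv_cancel₀ hw, C_1,
    one_mul, ← C_mul]
  congr 2
  field_simp

lemma two_comp {p : Polynomial F} : (2 : Polynomial F).comp p = 2 := by
  simp

lemma Gp_rec (hErec : ∀ μ r n, (E μ (r + 1) n).comp (X + 1) + E μ (r + 1) n = 2 * E μ r n)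
    (lam : F) (w : ℕ) (hw : (w:F) ≠ 0) (r d : ℕ) :
    (Gp E lam w (r+1) d).comp (X + C (w:F)) + Gp E lam w (r+1) d = 2 * Gp E lam w r d := by
  have hq : (C ((w:F))⁻¹ * X).comp (X + C (w:F)) = (X + 1 : Polynomial F).comp (C ((w:F))⁻¹ * X) := by
    simp only [mul_comp, C_comp, X_comp, add_comp, one_comp]
    rw [mul_add, ← C_mul, inv_mul_cancel₀ hw, C_1]
  have hkey : (Gp E lam w (r+1) d).comp (X + C (w:F))
      = C ((w:F))^d * ((E (lam/w) (r+1) d).comp (X + 1)).comp (C ((w:F))⁻¹ * X) := by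
    rw [Gp, mul_comp, comp_assoc, hq, ← comp_assoc]
    congr 1
    rw [← C_pow, C_comp, C_pow]
  rw [hkey, Gp, ← mul_add, ← add_comp, hErec, Gp, mul_comp, two_comp]
  ring

noncomputable def Pp (lam : F) (w w' : ℕ) (a b nn : ℕ) : Polynomial (Polynomial F) :=
  ∑ j ∈ range (nn+1), xup (C ((nn.choose j : F)) * Gp E lam w a (nn-j)) * C (Gp E lam w' b j)

lemma Qq_sum (c : F) (s : Finset ℕ) (f : ℕ → Polynomial (Polynomial F)) :
    Qq c (∑ j ∈ s, f j) = ∑ j ∈ s, Qq c (f j) := by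
  simp [Qq, Polynomial.sum_comp, Finset.sum_add_distrib]

lemma Rr_sum (c : F) (s : Finset ℕ) (f : ℕ → Polynomial (Polynomial F)) :
    Rr c (∑ j ∈ s, f j) = ∑ j ∈ s, Rr c (f j) := by
  simp [Rr, Finset.sum_add_distrib, ← coe_mapRingHom, map_sum]

lemma Qq_Pp (hErec : ∀ μ r n, (E μ (r + 1) n).comp (X + 1) + E μ (r + 1) n = 2 * E μ r n)
    (lam : F) (w w' : ℕ) (hw : (w:F) ≠ 0) (a b nn : ℕ) :
    Qq ((w:F)) (Pp E lam w w' (a+1) b nn) = ((2:ℕ) : Polynomial (Polynomial F)) * Pp E lam w w' a b nn := by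
  rw [Pp, Pp, Qq_sum, Finset.mul_sum]
  refine Finset.sum_congr rfl fun j _ => ?_
  rw [Qq_term]
  have h : (C ((nn.choose j : F)) * Gp E lam w (a+1) (nn-j)).comp (X + C (w:F))
        + C ((nn.choose j : F)) * Gp E lam w (a+1) (nn-j)
      = C ((nn.choose j : F)) * (2 * Gp E lam w a (nn-j)) := by
    rw [mul_comp, C_comp, ← mul_add, Gp_rec E hErec lam w hw]
  rw [h]
  simp only [map_mul, map_ofNat, map_natCast]
  ring

lemma Rr_Pp (hErec : ∀ μ r n, (E μ (r + 1) n).comp (X + 1) + E μ (r + 1) n = 2 * E μ r n)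
    (lam : F) (w w' : ℕ) (hw' : ((w':F)) ≠ 0) (a b nn : ℕ) :
    Rr ((w':F)) (Pp E lam w w' a (b+1) nn) = ((2:ℕ) : Polynomial (Polynomial F)) * Pp E lam w w' a b nn := by
  rw [Pp, Pp, Rr_sum, Finset.mul_sum]
  refine Finset.sum_congr rfl fun j _ => ?_
  rw [Rr_term, Gp_rec E hErec lam w' hw']
  simp only [map_mul, map_ofNat, map_natCast]
  ring

lemma Qq_iter_natCast (c : F) (t k : ℕ) (p : Polynomial (Polynomial F)) :
    (Qq c)^[k] ((t : Polynomial (Polynomial F)) * p) = t * (Qq c)^[k] p := by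
  induction k generalizing p with
  | zero => simp
  | succ k ih => rw [Function.iterate_succ_apply, Function.iterate_succ_apply, Qq_natCast, ih]

lemma Rr_iter_natCast (c : F) (t k : ℕ) (p : Polynomial (Polynomial F)) :
    (Rr c)^[k] ((t : Polynomial (Polynomial F)) * p) = t * (Rr c)^[k] p := by
  induction k generalizing p with
  | zero => simp
  | succ k ih => rw [Function.iterate_succ_apply, Function.iterate_succ_apply, Rr_natCast, ih]

lemma Qq_iter_Pp (hErec : ∀ μ r n, (E μ (r + 1) n).comp (X + 1) + E μ (r + 1) n = 2 * E μ r n)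
    (lam : F) (w w' : ℕ) (hw : (w:F) ≠ 0) (k a b nn : ℕ) :
    (Qq ((w:F)))^[k] (Pp E lam w w' (a+k) b nn)
      = ((2^k : ℕ) : Polynomial (Polynomial F)) * Pp E lam w w' a b nn := by
  induction k with
  | zero => simp
  | succ k ih =>
    rw [Function.iterate_succ_apply, show a + (k+1) = (a+k)+1 from rfl,
      Qq_Pp E hErec lam w w' hw, Qq_iter_natCast, ih, ← mul_assoc, ← Nat.cast_mul, ← pow_succ']

lemma Rr_iter_Pp (hErec : ∀ μ r n, (E μ (r + 1) n).comp (X + 1) + E μ (r + 1) n = 2 * E μ r n)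
    (lam : F) (w w' : ℕ) (hw' : ((w':F)) ≠ 0) (k a b nn : ℕ) :
    (Rr ((w':F)))^[k] (Pp E lam w w' a (b+k) nn)
      = ((2^k : ℕ) : Polynomial (Polynomial F)) * Pp E lam w w' a b nn := by
  induction k with
  | zero => simp
  | succ k ih =>
    rw [Function.iterate_succ_apply, show b + (k+1) = (b+k)+1 from rfl,
      Rr_Pp E hErec lam w w' hw', Rr_iter_natCast, ih, ← mul_assoc, ← Nat.cast_mul, ← pow_succ']

lemma dff_map_C (lam : F) (nn : ℕ) :
    (xup (dff lam nn) : Polynomial (Polynomial F)) = dff (C lam) nn := by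
  rw [dff, map_prod, dff]
  refine Finset.prod_congr rfl fun i _ => ?_
  simp [xup_apply, Polynomial.map_sub, C_mul]

lemma dff_eval_X (lam : F) (k : ℕ) :
    (dff (C lam : Polynomial F) k).eval (X : Polynomial F) = dff lam k := by
  rw [dff, eval_prod, dff]
  refine Finset.prod_congr rfl fun i _ => ?_
  simp [C_mul]

lemma Pp_zero (hE0 : ∀ μ n, E μ 0 n = dff μ n) (lam : F) (w w' : ℕ)
    (hw : (w:F) ≠ 0) (hw' : ((w':F)) ≠ 0) (nn : ℕ) :
    Pp E lam w w' 0 0 nn = Dfam lam nn 0 := by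
  rw [Dfam, C_0, add_zero, dff_map_C, dff_comp_add (C lam) (X : Polynomial F) nn, Pp]
  refine Finset.sum_congr rfl fun k hk => ?_
  rw [Gp_zero E hE0 lam w hw, Gp_zero E hE0 lam w' hw', dff_eval_X, map_mul, dff_map_C]
  have h3 : (xup (C ((nn.choose k : F))) : Polynomial (Polynomial F))
      = C ((nn.choose k : Polynomial F)) := by
    rw [xup_apply, map_C, C_eq_natCast]
  rw [h3, C_mul]
  ring
end GP

section GP2
set_option linter.unusedSectionVars false
variable {F : Type*} [Field F] [CharZero F]
variable (E : F → ℕ → ℕ → Polynomial F)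

lemma Pp_symm (hE0 : ∀ μ n, E μ 0 n = dff μ n)
    (hErec : ∀ μ r n, (E μ (r + 1) n).comp (X + 1) + E μ (r + 1) n = 2 * E μ r n)
    (lam : F) (w w' : ℕ) (hw : (w:F) ≠ 0) (hw' : ((w':F)) ≠ 0) (m nn : ℕ) :
    Pp E lam w w' m m nn = Pp E lam w' w m m nn := by
  have comQR : ∀ (c d : F) p, (Qq c)^[m] ((Rr d)^[m] p) = (Rr d)^[m] ((Qq c)^[m] p) := by
    intro c d p
    have hc : Function.Commute (Qq c) (Rr d) := fun x => Qq_Rr_comm c d x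
    exact ((hc.iterate_left m).iterate_right m) p
  have comQQ : ∀ (c d : F) p, (Qq c)^[m] ((Qq d)^[m] p) = (Qq d)^[m] ((Qq c)^[m] p) := by
    intro c d p
    have hc : Function.Commute (Qq c) (Qq d) := fun x => Qq_Qq_comm c d x
    exact ((hc.iterate_left m).iterate_right m) p
  have comRR : ∀ (c d : F) p, (Rr c)^[m] ((Rr d)^[m] p) = (Rr d)^[m] ((Rr c)^[m] p) := by
    intro c d p
    have hc : Function.Commute (Rr c) (Rr d) := fun x => Rr_Rr_comm c d x
    exact ((hc.iterate_left m).iterate_right m) p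
  apply (Rr_inj ((w':F))).iterate m
  apply (Qq_inj ((w:F))).iterate m
  apply (Rr_inj ((w:F))).iterate m
  apply (Qq_inj ((w':F))).iterate m
  -- goal : Qw'^m (Rw^m (Qw^m (Rw'^m P₁))) = Qw'^m (Rw^m (Qw^m (Rw'^m P₂)))
  have hP1a : (Rr ((w':F)))^[m] (Pp E lam w w' m m nn)
      = ((2^m : ℕ) : Polynomial (Polynomial F)) * Pp E lam w w' m 0 nn := by
    simpa using Rr_iter_Pp E hErec lam w w' hw' m m 0 nn
  have hP1b : (Qq ((w:F)))^[m] (Pp E lam w w' m 0 nn)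
      = ((2^m : ℕ) : Polynomial (Polynomial F)) * Dfam lam nn 0 := by
    have := Qq_iter_Pp E hErec lam w w' hw m 0 0 nn
    rw [Nat.zero_add] at this
    rw [this, Pp_zero E hE0 lam w w' hw hw']
  have hP2a : (Rr ((w:F)))^[m] (Pp E lam w' w m m nn)
      = ((2^m : ℕ) : Polynomial (Polynomial F)) * Pp E lam w' w m 0 nn := by
    simpa using Rr_iter_Pp E hErec lam w' w hw m m 0 nn
  have hP2b : (Qq ((w':F)))^[m] (Pp E lam w' w m 0 nn)
      = ((2^m : ℕ) : Polynomial (Polynomial F)) * Dfam lam nn 0 := by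
    have := Qq_iter_Pp E hErec lam w' w hw' m 0 0 nn
    rw [Nat.zero_add] at this
    rw [this, Pp_zero E hE0 lam w' w hw' hw]
  -- LHS chain
  have hL : (Qq ((w':F)))^[m] ((Rr ((w:F)))^[m] ((Qq ((w:F)))^[m] ((Rr ((w':F)))^[m]
        (Pp E lam w w' m m nn))))
      = ((2^m : ℕ) : Polynomial (Polynomial F)) * (((2^m : ℕ) : Polynomial (Polynomial F)) *
        (Qq ((w':F)))^[m] ((Rr ((w:F)))^[m] (Dfam lam nn 0))) := by
    rw [hP1a, Qq_iter_natCast, hP1b, Rr_iter_natCast, Rr_iter_natCast,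
      Qq_iter_natCast, Qq_iter_natCast]
  -- RHS chain : reorder
  have hR : (Qq ((w':F)))^[m] ((Rr ((w:F)))^[m] ((Qq ((w:F)))^[m] ((Rr ((w':F)))^[m]
        (Pp E lam w' w m m nn))))
      = ((2^m : ℕ) : Polynomial (Polynomial F)) * (((2^m : ℕ) : Polynomial (Polynomial F)) *
        (Qq ((w:F)))^[m] ((Rr ((w':F)))^[m] (Dfam lam nn 0))) := by
    rw [comQR ((w:F)) ((w':F)), comRR ((w:F)) ((w':F)), comQR ((w':F)) ((w':F)),
      ← comQR ((w:F)) ((w:F)), comQQ ((w':F)) ((w:F))]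
    -- now : Rw'^m (Qw^m (Qw'^m (Rw^m P₂)))
    rw [hP2a, Qq_iter_natCast, hP2b, Qq_iter_natCast, Qq_iter_natCast,
      Rr_iter_natCast, Rr_iter_natCast, ← comQR ((w:F)) ((w':F))]
  rw [hL, hR, key_swap ((w':F)) ((w:F)) m (Dfam lam nn 0) (Diag_Dfam lam nn 0)]
end GP2


section Final
set_option linter.unusedSectionVars false

instance inst_s12 : CharZero (RatFunc ℚ) :=
  charZero_of_injective_algebraMap (RatFunc.algebraMap_injective ℚ)

abbrev KK : Type := RatFunc ℚ
abbrev PKK : Type := Polynomial KK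
abbrev AA : Type := Polynomial PKK

lemma halg : (algebraMap KK AA)
    = (Polynomial.C : PKK →+* AA).comp (Polynomial.C : KK →+* PKK) := by
  refine RingHom.ext fun a => ?_
  simp [Polynomial.algebraMap_apply]

lemma haeval (x : AA) (p : PKK) :
    aeval x p = eval₂ ((Polynomial.C : PKK →+* AA).comp (Polynomial.C : KK →+* PKK)) x p := by
  rw [aeval_def, halg]

lemma LB (E : KK → ℕ → ℕ → Polynomial KK)
    (hE0 : ∀ μ n, E μ 0 n = dff μ n)
    (hErec : ∀ μ r n, (E μ (r + 1) n).comp (X + 1) + E μ (r + 1) n = 2 * E μ r n)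
    (w₁ w₂ : ℕ) (h1 : (w₁:KK) ≠ 0) (h2 : (w₂:KK) ≠ 0) (m n : ℕ) (Y : PKK) :
    ∑ j ∈ range (n+1),
      C (C ((n.choose j : KK) * (w₂:KK)^j * (w₁:KK)^(n-j))) *
        aeval (C (C (w₂:KK)) * X : AA) (E (RatFunc.X / (w₁:KK)) m (n-j)) *
        aeval (C (C (w₁:KK) * Y) : AA) (E (RatFunc.X / (w₂:KK)) m j)
    = ∑ j ∈ range (n+1),
      C (C ((n.choose j : KK) * (w₁:KK)^j * (w₂:KK)^(n-j))) *
        aeval (C (C (w₁:KK)) * X : AA) (E (RatFunc.X / (w₂:KK)) m (n-j)) *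
        aeval (C (C (w₂:KK) * Y) : AA) (E (RatFunc.X / (w₁:KK)) m j) := by
  have hsym := Pp_symm E hE0 hErec RatFunc.X w₁ w₂ h1 h2 m n
  set t : PKK := C ((w₁:KK) * (w₂:KK)) * Y with ht
  set g : PKK →+* AA :=
    (Polynomial.C : PKK →+* AA).comp (eval₂RingHom (Polynomial.C : KK →+* PKK) t) with hg
  set u : AA := Polynomial.C (Polynomial.C ((w₁:KK) * (w₂:KK))) * X with hu
  have hgC : g.comp (Polynomial.C : KK →+* PKK)
      = (Polynomial.C : PKK →+* AA).comp (Polynomial.C : KK →+* PKK) := by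
    refine RingHom.ext fun a => ?_
    simp [hg, eval₂_C]
  have hterm : ∀ (w w' : ℕ), (w:KK) ≠ 0 → (w':KK) ≠ 0 → ((w:KK) * (w':KK) = (w₁:KK) * (w₂:KK)) →
      ∀ (ch : KK) (d j : ℕ),
      eval₂ g u (xup (C ch * Gp E RatFunc.X w m d) * C (Gp E RatFunc.X w' m j))
      = C (C (ch * (w':KK)^j * (w:KK)^d)) *
          aeval (C (C (w':KK)) * X : AA) (E (RatFunc.X / (w:KK)) m d) *
          aeval (C (C (w:KK) * Y) : AA) (E (RatFunc.X / (w':KK)) m j) := by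
    intro w w' hw hw' hprod ch d j
    have hpoint : eval₂ ((Polynomial.C : PKK →+* AA).comp (Polynomial.C : KK →+* PKK)) u
        (C ((w:KK))⁻¹ * X) = C (C (w':KK)) * X := by
      rw [Polynomial.eval₂_mul, eval₂_C, eval₂_X, RingHom.comp_apply, hu, ← mul_assoc,
        ← map_mul, ← map_mul, ← hprod, ← mul_assoc, inv_mul_cancel₀ hw, one_mul]
    have hxpart : eval₂ g u (xup (C ch * Gp E RatFunc.X w m d) : AA)
        = C (C ch) * ((C (C ((w:KK))))^d *
            aeval (C (C (w':KK)) * X : AA) (E (RatFunc.X / (w:KK)) m d)) := by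
      rw [xup_apply, eval₂_map, hgC, Polynomial.eval₂_mul, eval₂_C, RingHom.comp_apply]
      congr 1
      rw [Gp, Polynomial.eval₂_mul, Polynomial.eval₂_pow, eval₂_C, RingHom.comp_apply]
      congr 1
      rw [Polynomial.eval₂_comp, hpoint, haeval]
    have hypart : eval₂ g u ((C (Gp E RatFunc.X w' m j)) : AA)
        = (C (C ((w':KK))))^j * aeval (C (C (w:KK) * Y) : AA) (E (RatFunc.X / (w':KK)) m j) := by
      rw [eval₂_C, hg, RingHom.comp_apply]
      have hcomp : eval₂RingHom (Polynomial.C : KK →+* PKK) t (Gp E RatFunc.X w' m j)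
          = (C ((w':KK)))^j * (E (RatFunc.X / (w':KK)) m j).comp (C (w:KK) * Y) := by
        rw [coe_eval₂RingHom]
        show (Gp E RatFunc.X w' m j).comp t = _
        rw [Gp, mul_comp, ← C_pow, C_comp, comp_assoc, mul_comp, C_comp, X_comp, C_pow]
        congr 2
        rw [ht, ← mul_assoc, ← map_mul]
        congr 2
        rw [← hprod, mul_comm ((w:KK)) ((w':KK)), ← mul_assoc, inv_mul_cancel₀ hw', one_mul]
      rw [hcomp, map_mul, map_pow]
      congr 1
      show Polynomial.C (eval₂ Polynomial.C (C (w:KK) * Y) (E (RatFunc.X / (w':KK)) m j)) = _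
      rw [Polynomial.hom_eval₂, haeval]
    rw [Polynomial.eval₂_mul, hxpart, hypart]
    simp only [map_mul, map_pow]
    ring
  calc ∑ j ∈ range (n+1),
      C (C ((n.choose j : KK) * (w₂:KK)^j * (w₁:KK)^(n-j))) *
        aeval (C (C (w₂:KK)) * X : AA) (E (RatFunc.X / (w₁:KK)) m (n-j)) *
        aeval (C (C (w₁:KK) * Y) : AA) (E (RatFunc.X / (w₂:KK)) m j)
      = eval₂ g u (Pp E RatFunc.X w₁ w₂ m m n) := by
        rw [Pp, show eval₂ g u (∑ j ∈ range (n+1),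
            xup (C ((n.choose j : KK)) * Gp E RatFunc.X w₁ m (n-j)) * C (Gp E RatFunc.X w₂ m j))
          = ∑ j ∈ range (n+1), eval₂ g u
            (xup (C ((n.choose j : KK)) * Gp E RatFunc.X w₁ m (n-j)) * C (Gp E RatFunc.X w₂ m j))
          from map_sum (eval₂RingHom g u) _ _]
        refine Finset.sum_congr rfl fun j _ => ?_
        rw [hterm w₁ w₂ h1 h2 rfl]
    _ = eval₂ g u (Pp E RatFunc.X w₂ w₁ m m n) := by rw [hsym]
    _ = ∑ j ∈ range (n+1),
      C (C ((n.choose j : KK) * (w₁:KK)^j * (w₂:KK)^(n-j))) *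
        aeval (C (C (w₁:KK)) * X : AA) (E (RatFunc.X / (w₂:KK)) m (n-j)) *
        aeval (C (C (w₂:KK) * Y) : AA) (E (RatFunc.X / (w₁:KK)) m j) := by
        rw [Pp, show eval₂ g u (∑ j ∈ range (n+1),
            xup (C ((n.choose j : KK)) * Gp E RatFunc.X w₂ m (n-j)) * C (Gp E RatFunc.X w₁ m j))
          = ∑ j ∈ range (n+1), eval₂ g u
            (xup (C ((n.choose j : KK)) * Gp E RatFunc.X w₂ m (n-j)) * C (Gp E RatFunc.X w₁ m j))
          from map_sum (eval₂RingHom g u) _ _]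
        refine Finset.sum_congr rfl fun j _ => ?_
        rw [hterm w₂ w₁ h2 h1 (mul_comm _ _)]
end Final

lemma aeval_CC (x : AA) (a : KK) : Polynomial.aeval x (Polynomial.C a) = C (C a) := by
  rw [aeval_C, halg]; rfl

lemma aeval_comp_shift (b : AA) (c : KK) (p : PKK) :
    Polynomial.aeval b (p.comp (X + Polynomial.C c)) = Polynomial.aeval (b + C (C c)) p := by
  rw [aeval_comp]
  congr 1
  rw [map_add, aeval_X, aeval_CC]


/-- Theorem 1 of the paper: symmetric identity for higher-order degenerate Euler
polynomials, as an identity in `ℚ(λ)[y][x]` (outer variable `x`, inner variable `y`).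
`E μ r n` is `𝓔_n^{(r)}(·|μ)`, defined by `E μ 0 n = (·|μ)_n` and the recursion. -/
theorem stmt12 (E : RatFunc ℚ → ℕ → ℕ → Polynomial (RatFunc ℚ))
    (hE0 : ∀ μ n, E μ 0 n = dff μ n)
    (hErec : ∀ μ r n,
      (E μ (r + 1) n).comp (Polynomial.X + 1) + E μ (r + 1) n = 2 * E μ r n)
    (w₁ w₂ : ℕ) (hw₁ : Odd w₁) (hw₂ : Odd w₂) (hw₁' : 0 < w₁) (hw₂' : 0 < w₂)
    (n m : ℕ) (hm : 1 ≤ m) :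
    ∑ j ∈ Finset.range (n + 1),
        Polynomial.C (Polynomial.C ((n.choose j : RatFunc ℚ) * (w₂ : RatFunc ℚ) ^ j *
            (w₁ : RatFunc ℚ) ^ (n - j))) *
          Polynomial.aeval
            (Polynomial.C (Polynomial.C (w₂ : RatFunc ℚ)) *
              (Polynomial.X : Polynomial (Polynomial (RatFunc ℚ))))
            (E (RatFunc.X / (w₁ : RatFunc ℚ)) m (n - j)) *
          ∑ k ∈ Finset.range (j + 1),
            Polynomial.C (Polynomial.C ((j.choose k : RatFunc ℚ) *
                Stilde (RatFunc.X / (w₂ : RatFunc ℚ)) k (w₁ - 1))) *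
              Polynomial.aeval
                (Polynomial.C (Polynomial.C (w₁ : RatFunc ℚ) * Polynomial.X) :
                  Polynomial (Polynomial (RatFunc ℚ)))
                (E (RatFunc.X / (w₂ : RatFunc ℚ)) (m - 1) (j - k)) =
      ∑ j ∈ Finset.range (n + 1),
        Polynomial.C (Polynomial.C ((n.choose j : RatFunc ℚ) * (w₁ : RatFunc ℚ) ^ j *
            (w₂ : RatFunc ℚ) ^ (n - j))) *
          Polynomial.aeval
            (Polynomial.C (Polynomial.C (w₁ : RatFunc ℚ)) *
              (Polynomial.X : Polynomial (Polynomial (RatFunc ℚ))))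
            (E (RatFunc.X / (w₂ : RatFunc ℚ)) m (n - j)) *
          ∑ k ∈ Finset.range (j + 1),
            Polynomial.C (Polynomial.C ((j.choose k : RatFunc ℚ) *
                Stilde (RatFunc.X / (w₁ : RatFunc ℚ)) k (w₂ - 1))) *
              Polynomial.aeval
                (Polynomial.C (Polynomial.C (w₂ : RatFunc ℚ) * Polynomial.X) :
                  Polynomial (Polynomial (RatFunc ℚ)))
                (E (RatFunc.X / (w₁ : RatFunc ℚ)) (m - 1) (j - k)) := by

  have h1 : ((w₁ : KK)) ≠ 0 := Nat.cast_ne_zero.mpr hw₁'.ne'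
  have h2 : ((w₂ : KK)) ≠ 0 := Nat.cast_ne_zero.mpr hw₂'.ne'
  have h2A : (2 : AA) ≠ 0 := by norm_num
  have hInner : ∀ (wa wb : ℕ), Odd wa → ∀ j,
      (2:AA) * ∑ k ∈ Finset.range (j+1),
          C (C ((j.choose k : KK) * Stilde (RatFunc.X / (wb:KK)) k (wa-1))) *
            Polynomial.aeval (C (C (wa:KK) * X) : AA) (E (RatFunc.X / (wb:KK)) (m-1) (j-k))
      = Polynomial.aeval (C (C (wa:KK) * X) : AA) (E (RatFunc.X / (wb:KK)) m j)
        + Polynomial.aeval (C (C (wa:KK) * (X+1)) : AA) (E (RatFunc.X / (wb:KK)) m j) := by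
    intro wa wb hwa j
    have base := E_inner E hE0 hErec (RatFunc.X / (wb:KK)) j (m-1) wa hwa
    rw [Nat.sub_add_cancel hm] at base
    have happ := congrArg (Polynomial.aeval (C (C (wa:KK) * X) : AA)) base
    simp only [map_mul, map_add, map_ofNat, map_sum, aeval_CC, aeval_comp_shift] at happ
    simp only [← map_mul, ← map_add] at happ
    rw [show (C ((wa:KK)) * X + C ((wa:KK)) : PKK)
          = C ((wa:KK)) * (X+1) from by ring] at happ
    exact happ
  apply mul_left_cancel₀ h2A
  calc (2:AA) * ∑ j ∈ Finset.range (n + 1),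
        C (C ((n.choose j : KK) * (w₂:KK) ^ j * (w₁:KK) ^ (n - j))) *
          Polynomial.aeval (C (C (w₂:KK)) * X : AA) (E (RatFunc.X / (w₁:KK)) m (n - j)) *
          ∑ k ∈ Finset.range (j + 1),
            C (C ((j.choose k : KK) * Stilde (RatFunc.X / (w₂:KK)) k (w₁ - 1))) *
              Polynomial.aeval (C (C (w₁:KK) * X) : AA) (E (RatFunc.X / (w₂:KK)) (m-1) (j - k))
      = ∑ j ∈ Finset.range (n + 1),
          C (C ((n.choose j : KK) * (w₂:KK) ^ j * (w₁:KK) ^ (n - j))) *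
            Polynomial.aeval (C (C (w₂:KK)) * X : AA) (E (RatFunc.X / (w₁:KK)) m (n - j)) *
            (Polynomial.aeval (C (C (w₁:KK) * X) : AA) (E (RatFunc.X / (w₂:KK)) m j)
              + Polynomial.aeval (C (C (w₁:KK) * (X+1)) : AA) (E (RatFunc.X / (w₂:KK)) m j)) := by
        rw [Finset.mul_sum]
        refine Finset.sum_congr rfl fun j _ => ?_
        rw [← hInner w₁ w₂ hw₁ j]
        ring
    _ = (∑ j ∈ Finset.range (n + 1),
          C (C ((n.choose j : KK) * (w₂:KK) ^ j * (w₁:KK) ^ (n - j))) *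
            Polynomial.aeval (C (C (w₂:KK)) * X : AA) (E (RatFunc.X / (w₁:KK)) m (n - j)) *
            Polynomial.aeval (C (C (w₁:KK) * X) : AA) (E (RatFunc.X / (w₂:KK)) m j))
        + ∑ j ∈ Finset.range (n + 1),
          C (C ((n.choose j : KK) * (w₂:KK) ^ j * (w₁:KK) ^ (n - j))) *
            Polynomial.aeval (C (C (w₂:KK)) * X : AA) (E (RatFunc.X / (w₁:KK)) m (n - j)) *
            Polynomial.aeval (C (C (w₁:KK) * (X+1)) : AA) (E (RatFunc.X / (w₂:KK)) m j) := by
        rw [← Finset.sum_add_distrib]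
        refine Finset.sum_congr rfl fun j _ => ?_
        ring
    _ = (∑ j ∈ Finset.range (n + 1),
          C (C ((n.choose j : KK) * (w₁:KK) ^ j * (w₂:KK) ^ (n - j))) *
            Polynomial.aeval (C (C (w₁:KK)) * X : AA) (E (RatFunc.X / (w₂:KK)) m (n - j)) *
            Polynomial.aeval (C (C (w₂:KK) * X) : AA) (E (RatFunc.X / (w₁:KK)) m j))
        + ∑ j ∈ Finset.range (n + 1),
          C (C ((n.choose j : KK) * (w₁:KK) ^ j * (w₂:KK) ^ (n - j))) *
            Polynomial.aeval (C (C (w₁:KK)) * X : AA) (E (RatFunc.X / (w₂:KK)) m (n - j)) *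
            Polynomial.aeval (C (C (w₂:KK) * (X+1)) : AA) (E (RatFunc.X / (w₁:KK)) m j) := by
        rw [LB E hE0 hErec w₁ w₂ h1 h2 m n X, LB E hE0 hErec w₁ w₂ h1 h2 m n (X+1)]
    _ = ∑ j ∈ Finset.range (n + 1),
          C (C ((n.choose j : KK) * (w₁:KK) ^ j * (w₂:KK) ^ (n - j))) *
            Polynomial.aeval (C (C (w₁:KK)) * X : AA) (E (RatFunc.X / (w₂:KK)) m (n - j)) *
            (Polynomial.aeval (C (C (w₂:KK) * X) : AA) (E (RatFunc.X / (w₁:KK)) m j)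
              + Polynomial.aeval (C (C (w₂:KK) * (X+1)) : AA) (E (RatFunc.X / (w₁:KK)) m j)) := by
        rw [← Finset.sum_add_distrib]
        refine Finset.sum_congr rfl fun j _ => ?_
        ring
    _ = (2:AA) * ∑ j ∈ Finset.range (n + 1),
          C (C ((n.choose j : KK) * (w₁:KK) ^ j * (w₂:KK) ^ (n - j))) *
            Polynomial.aeval (C (C (w₁:KK)) * X : AA) (E (RatFunc.X / (w₂:KK)) m (n - j)) *
            ∑ k ∈ Finset.range (j + 1),
              C (C ((j.choose k : KK) * Stilde (RatFunc.X / (w₁:KK)) k (w₂ - 1))) *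
                Polynomial.aeval (C (C (w₂:KK) * X) : AA)
                  (E (RatFunc.X / (w₁:KK)) (m-1) (j - k)) := by
        rw [Finset.mul_sum]
        refine Finset.sum_congr rfl fun j _ => ?_
        rw [← hInner w₂ w₁ hw₂ j]
        ring
end
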